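/- Let G and H be finite connected simple graphs, each with at least two vertices, and let S ⊆ V(G) × V(H). Then S is an MEG-set of the Cartesian product G □ H if and only if for every x ∈ V(G) the slice S_{x,*} = {v ∈ V(H) : (x,v) ∈ S} is an MEG-set of H and for every y ∈ V(H) the slice S_{*,y} = {v ∈ V(G) : (v,y) ∈ S} is an MEG-set of G. -/

import Mathlib

open SimpleGraph

/-- `S` is a monitoring edge-geodetic set (MEG-set) of `G`: for every edge `e` of `G`
there are `x, y ∈ S` whose distance in `G − e` differs from their distance in `G`
(including the case that they become disconnected in `G − e`). -/
def IsMEGSet {V : Type*} (G : SimpleGraph V) (S : Set V) : Prop :=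
  ∀ e ∈ G.edgeSet, ∃ x ∈ S, ∃ y ∈ S,
    ¬ (G.deleteEdges {e}).Reachable x y ∨ (G.deleteEdges {e}).dist x y ≠ G.dist x y

/-- The monitoring edge-geodetic number: the minimum cardinality of an MEG-set. -/
noncomputable def meg {V : Type*} [Fintype V] (G : SimpleGraph V) : ℕ :=
  sInf {n | ∃ S : Set V, IsMEGSet G S ∧ S.ncard = n}

/-- The strong product `G ⊠ H` of two simple graphs: `(a,b)` adjacent to `(c,d)` iff
`a = c` and `bd ∈ E(H)`, or `b = d` and `ac ∈ E(G)`, or `ac ∈ E(G)` and `bd ∈ E(H)`. -/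
def strongProd {α β : Type*} (G : SimpleGraph α) (H : SimpleGraph β) :
    SimpleGraph (α × β) where
  Adj x y := (x.1 = y.1 ∧ H.Adj x.2 y.2) ∨ (x.2 = y.2 ∧ G.Adj x.1 y.1) ∨
    (G.Adj x.1 y.1 ∧ H.Adj x.2 y.2)
  symm := ⟨fun x y => by
    rintro (⟨h1, h2⟩ | ⟨h1, h2⟩ | ⟨h1, h2⟩)
    · exact Or.inl ⟨h1.symm, h2.symm⟩
    · exact Or.inr (Or.inl ⟨h1.symm, h2.symm⟩)
    · exact Or.inr (Or.inr ⟨h1.symm, h2.symm⟩)⟩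
  loopless := ⟨fun x => by
    rintro (⟨_, h⟩ | ⟨_, h⟩ | ⟨h, _⟩)
    · exact H.ne_of_adj h rfl
    · exact G.ne_of_adj h rfl
    · exact G.ne_of_adj h rfl⟩

infixl:70 " ⊠ " => strongProd

namespace MEGAux
open SimpleGraph Walk

variable {α β : Type*} {G : SimpleGraph α} {H : SimpleGraph β}

/-- Project a box-product walk to the left factor. -/
def projL [DecidableEq α] : ∀ {x y : α × β}, (G □ H).Walk x y → G.Walk x.1 y.1
  | _, _, .nil => .nil
  | x, _, .cons (v := z) h w =>
    if hc : x.1 = z.1 then (projL w).copy hc.symm rfl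
    else Walk.cons ((h.resolve_right fun hh => hc hh.2).1) (projL w)

/-- Project a box-product walk to the right factor. -/
def projR [DecidableEq β] : ∀ {x y : α × β}, (G □ H).Walk x y → H.Walk x.2 y.2
  | _, _, .nil => .nil
  | x, _, .cons (v := z) h w =>
    if hc : x.2 = z.2 then (projR w).copy hc.symm rfl
    else Walk.cons ((h.resolve_left fun hh => hc hh.2).1) (projR w)

lemma length_projL_add_projR [DecidableEq α] [DecidableEq β] :
    ∀ {x y : α × β} (w : (G □ H).Walk x y),
      (projL w).length + (projR w).length = w.length
  | _, _, .nil => rfl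
  | x, _, .cons (v := z) h w => by
    have hne : x ≠ z := h.ne
    rcases h with ⟨h1, h2⟩ | ⟨h1, h2⟩
    · have hc1 : ¬ x.1 = z.1 := h1.ne
      unfold projL projR
      rw [dif_neg hc1, dif_pos h2]
      simp only [Walk.length_copy, Walk.length_cons, ← length_projL_add_projR w]
      change _ = w.length + 1
      have := length_projL_add_projR w
      omega
    · have hc2 : ¬ x.2 = z.2 := h1.ne
      unfold projL projR
      rw [dif_pos h2, dif_neg hc2]
      simp only [Walk.length_copy, Walk.length_cons, ← length_projL_add_projR w]
      change _ = w.length + 1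
      have := length_projL_add_projR w
      omega

lemma projL_length_le [DecidableEq α] {x y : α × β} (w : (G □ H).Walk x y) :
    (projL w).length ≤ w.length := by
  classical
  have := length_projL_add_projR w
  omega

lemma projR_length_le [DecidableEq β] {x y : α × β} (w : (G □ H).Walk x y) :
    (projR w).length ≤ w.length := by
  classical
  have := length_projL_add_projR w
  omega

lemma projL_edges [DecidableEq α] :
    ∀ {x y : α × β} (w : (G □ H).Walk x y) {u v : α},
      s(u, v) ∈ (projL w).edges → ∃ b : β, s((u, b), (v, b)) ∈ w.edges
  | _, _, .nil, u, v => by simp [projL]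
  | x, _, .cons (v := z) h w, u, v => by
    by_cases hc : x.1 = z.1
    · rw [projL, dif_pos hc, Walk.edges_copy]
      intro hmem
      obtain ⟨b, hb⟩ := projL_edges w hmem
      exact ⟨b, by simp [Walk.edges_cons, hb]⟩
    · rw [projL, dif_neg hc]
      intro hmem
      rcases (List.mem_cons).1 hmem with heq | hmem'
      · have h2 : x.2 = z.2 := (h.resolve_right fun hh => hc hh.2).2
        obtain ⟨x1, x2⟩ := x
        obtain ⟨z1, z2⟩ := z
        simp only at h2 heq
        subst h2
        have hhead : s((x1, x2), (z1, x2)) ∈ (Walk.cons h w).edges := by simp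
        rcases Sym2.eq_iff.1 heq with ⟨hu, hv⟩ | ⟨hu, hv⟩
        · subst hu; subst hv; exact ⟨x2, hhead⟩
        · subst hu; subst hv
          exact ⟨x2, by rwa [Sym2.eq_swap]⟩
      · obtain ⟨b, hb⟩ := projL_edges w hmem'
        exact ⟨b, by simp [Walk.edges_cons, hb]⟩

end MEGAux

namespace MEGAux2
open SimpleGraph Walk

variable {α β : Type*} {G : SimpleGraph α} {H : SimpleGraph β}

lemma dist_le_dist_of_le {ν : Type*} {G' G : SimpleGraph ν} (h : G' ≤ G) {u v : ν}
    (hr : G'.Reachable u v) : G.dist u v ≤ G'.dist u v := by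
  obtain ⟨w, hw⟩ := hr.exists_walk_length_eq_dist
  calc G.dist u v ≤ (w.mapLe h).length := dist_le _
    _ = w.length := by simp [Walk.mapLe]
    _ = G'.dist u v := hw

lemma length_boxProdLeft' {a₁ a₂ : α} (b : β) (w : G.Walk a₁ a₂) :
    (w.boxProdLeft H b).length = w.length :=
  Walk.length_map _ _

lemma length_boxProdRight' {b₁ b₂ : β} (a : α) (w : H.Walk b₁ b₂) :
    (w.boxProdRight G a).length = w.length :=
  Walk.length_map _ _

lemma edges_boxProdLeft' {a₁ a₂ : α} (b : β) (w : G.Walk a₁ a₂) :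
    (w.boxProdLeft H b).edges = w.edges.map (Sym2.map (G.boxProdLeft H b).toHom) :=
  Walk.edges_map _ _

lemma edges_boxProdRight' {b₁ b₂ : β} (a : α) (w : H.Walk b₁ b₂) :
    (w.boxProdRight G a).edges = w.edges.map (Sym2.map (G.boxProdRight H a).toHom) :=
  Walk.edges_map _ _

lemma boxProd_dist_le (hG : G.Connected) (hH : H.Connected) (p q : α × β) :
    (G □ H).dist p q ≤ G.dist p.1 q.1 + H.dist p.2 q.2 := by
  obtain ⟨w₁, hw₁⟩ := hG.exists_walk_length_eq_dist p.1 q.1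
  obtain ⟨w₂, hw₂⟩ := hH.exists_walk_length_eq_dist p.2 q.2
  have : (G □ H).dist p q ≤ ((w₁.boxProdLeft H p.2).append (w₂.boxProdRight G q.1)).length :=
    dist_le _
  rwa [Walk.length_append, length_boxProdLeft', length_boxProdRight', hw₁, hw₂] at this

lemma le_length_of_walk {p q : α × β} (w : (G □ H).Walk p q) :
    G.dist p.1 q.1 + H.dist p.2 q.2 ≤ w.length := by
  classical
  have h1 : G.dist p.1 q.1 ≤ (MEGAux.projL w).length := dist_le _
  have h2 : H.dist p.2 q.2 ≤ (MEGAux.projR w).length := dist_le _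
  have := MEGAux.length_projL_add_projR w
  omega

lemma boxProd_dist (hG : G.Connected) (hH : H.Connected) (p q : α × β) :
    (G □ H).dist p q = G.dist p.1 q.1 + H.dist p.2 q.2 := by
  refine le_antisymm (boxProd_dist_le hG hH p q) ?_
  obtain ⟨w, hw⟩ := ((hG.boxProd hH).exists_walk_length_eq_dist p q)
  rw [← hw]
  exact le_length_of_walk w

lemma edge_boxProdRight_not_mem {p a c : α} {b q q' : β} (hac : a ≠ c) (w : H.Walk q q') :
    s((a, b), (c, b)) ∉ (w.boxProdRight G p).edges := by
  intro hmem
  rw [edges_boxProdRight'] at hmem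
  obtain ⟨e₀, _, he⟩ := List.mem_map.1 hmem
  induction e₀ with
  | h x y =>
    simp only [Sym2.map_pair_eq] at he
    rcases Sym2.eq_iff.1 he with ⟨h1, h2⟩ | ⟨h1, h2⟩
    · exact hac (((Prod.ext_iff.1 h1).1).symm.trans (Prod.ext_iff.1 h2).1)
    · exact hac (((Prod.ext_iff.1 h2).1).symm.trans (Prod.ext_iff.1 h1).1)

lemma edge_boxProdLeft_mem {g₁ g₂ : α} {b : β} (w : G.Walk g₁ g₂) {ed : Sym2 (α × β)}
    (hm : ed ∈ (w.boxProdLeft H b).edges) :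
    ∃ u v, s(u, v) ∈ w.edges ∧ ed = s((u, b), (v, b)) := by
  rw [edges_boxProdLeft'] at hm
  obtain ⟨e₀, he₀, he⟩ := List.mem_map.1 hm
  induction e₀ with
  | h x y => exact ⟨x, y, he₀, by simpa [Sym2.map_pair_eq] using he.symm⟩

lemma edge_boxProdRight_mem {h₁ h₂ : β} {a : α} (w : H.Walk h₁ h₂) {ed : Sym2 (α × β)}
    (hm : ed ∈ (w.boxProdRight G a).edges) :
    ∃ u v, s(u, v) ∈ w.edges ∧ ed = s((a, u), (a, v)) := by
  rw [edges_boxProdRight'] at hm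
  obtain ⟨e₀, he₀, he⟩ := List.mem_map.1 hm
  induction e₀ with
  | h x y => exact ⟨x, y, he₀, by simpa [Sym2.map_pair_eq] using he.symm⟩

end MEGAux2

namespace MEGAux3
open SimpleGraph Walk

variable {α β : Type*} {G : SimpleGraph α} {H : SimpleGraph β}

/-- The monitoring condition for a single edge. -/
def monBy {ν : Type*} (Γ : SimpleGraph ν) (S : Set ν) (e : Sym2 ν) : Prop :=
  ∃ x ∈ S, ∃ y ∈ S,
    ¬ (Γ.deleteEdges {e}).Reachable x y ∨ (Γ.deleteEdges {e}).dist x y ≠ Γ.dist x y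

lemma deleteEdge_connected (hG : G.Connected) (hH : H.Connected) {a c : α} (hac : G.Adj a c)
    {b b' : β} (hb : b' ≠ b) :
    ((G □ H).deleteEdges {s((a, b), (c, b))}).Connected := by
  set P' := (G □ H).deleteEdges {s((a, b), (c, b))} with hP'
  have vert : ∀ (p : α) (q q' : β), P'.Reachable (p, q) (p, q') := by
    intro p q q'
    obtain ⟨w⟩ := hH.preconnected q q'
    refine ⟨(w.boxProdRight G p).toDeleteEdges _ ?_⟩
    intro ed hed hedmem
    rw [Set.mem_singleton_iff] at hedmem
    subst hedmem
    exact MEGAux2.edge_boxProdRight_not_mem hac.ne w hed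
  have horiz : ∀ p p' : α, P'.Reachable (p, b') (p', b') := by
    intro p p'
    obtain ⟨w⟩ := hG.preconnected p p'
    refine ⟨(w.boxProdLeft H b').toDeleteEdges _ ?_⟩
    intro ed hed hedmem
    rw [Set.mem_singleton_iff] at hedmem
    subst hedmem
    obtain ⟨u, v, _, huv⟩ := MEGAux2.edge_boxProdLeft_mem w hed
    rcases Sym2.eq_iff.1 huv with ⟨h1, _⟩ | ⟨h1, _⟩
    · exact hb ((Prod.ext_iff.1 h1).2).symm
    · exact hb ((Prod.ext_iff.1 h1).2).symm
  have pre : P'.Preconnected := by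
    intro x y
    have h1 : P'.Reachable (x.1, x.2) (x.1, b') := vert _ _ _
    have h2 : P'.Reachable (x.1, b') (y.1, b') := horiz _ _
    have h3 : P'.Reachable (y.1, b') (y.1, y.2) := vert _ _ _
    simpa using (h1.trans h2).trans h3
  have : Nonempty (α × β) := ⟨(a, b)⟩
  exact ⟨pre⟩

/-- Iso transport for edge deletion (single edge). -/
@[reducible] def isoDeleteEdge {ν ν' : Type*} {Γ : SimpleGraph ν} {Γ' : SimpleGraph ν'} (f : Γ ≃g Γ')
    (e : Sym2 ν) : Γ.deleteEdges {e} ≃g Γ'.deleteEdges {Sym2.map f e} where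
  toEquiv := f.toEquiv
  map_rel_iff' := by
    intro u v
    simp only [deleteEdges_adj, Set.mem_singleton_iff, Equiv.coe_fn_mk]
    have hinj : Function.Injective (Sym2.map f) := Sym2.map.injective f.toEquiv.injective
    have hpair : s(f.toEquiv u, f.toEquiv v) = Sym2.map f s(u, v) :=
      (Sym2.map_pair_eq f u v).symm
    constructor
    · rintro ⟨h1, h2⟩
      exact ⟨f.map_adj_iff.1 h1, fun hc => h2 (hpair.trans (congrArg _ hc))⟩
    · rintro ⟨h1, h2⟩
      exact ⟨f.map_adj_iff.2 h1, fun hc => h2 (hinj (hpair.symm.trans hc))⟩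

lemma iso_dist_le {ν ν' : Type*} {Γ : SimpleGraph ν} {Γ' : SimpleGraph ν'} (f : Γ ≃g Γ')
    (u v : ν) : Γ'.dist (f u) (f v) ≤ Γ.dist u v := by
  by_cases hr : Γ.Reachable u v
  · obtain ⟨w, hw⟩ := hr.exists_walk_length_eq_dist
    rw [← hw]
    calc Γ'.dist (f u) (f v) ≤ (w.map f.toHom).length := dist_le _
      _ = w.length := Walk.length_map f.toHom w
  · rw [dist_eq_zero_of_not_reachable hr,
      dist_eq_zero_of_not_reachable (by rwa [Iso.reachable_iff])]

lemma iso_dist {ν ν' : Type*} {Γ : SimpleGraph ν} {Γ' : SimpleGraph ν'} (f : Γ ≃g Γ')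
    (u v : ν) : Γ'.dist (f u) (f v) = Γ.dist u v := by
  refine le_antisymm (iso_dist_le f u v) ?_
  have := iso_dist_le f.symm (f u) (f v)
  simpa using this

lemma monBy_map {ν ν' : Type*} {Γ : SimpleGraph ν} {Γ' : SimpleGraph ν'} (f : Γ ≃g Γ')
    (S : Set ν) (e : Sym2 ν) :
    monBy Γ' (f '' S) (Sym2.map f e) ↔ monBy Γ S e := by
  constructor
  · rintro ⟨x', hx', y', hy', hcond⟩
    obtain ⟨x, hx, rfl⟩ := hx'
    obtain ⟨y, hy, rfl⟩ := hy'
    refine ⟨x, hx, y, hy, ?_⟩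
    have hre : (Γ'.deleteEdges {Sym2.map f e}).Reachable (f x) (f y) ↔
        (Γ.deleteEdges {e}).Reachable x y := Iso.reachable_iff (φ := isoDeleteEdge f e) (u := x) (v := y)
    have hd1 : (Γ'.deleteEdges {Sym2.map f e}).dist (f x) (f y) =
        (Γ.deleteEdges {e}).dist x y := iso_dist (isoDeleteEdge f e) x y
    have hd2 : Γ'.dist (f x) (f y) = Γ.dist x y := iso_dist f x y
    rcases hcond with h | h
    · exact Or.inl (by rwa [hre] at h)
    · exact Or.inr (by rwa [hd1, hd2] at h)
  · rintro ⟨x, hx, y, hy, hcond⟩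
    refine ⟨f x, ⟨x, hx, rfl⟩, f y, ⟨y, hy, rfl⟩, ?_⟩
    have hre : (Γ'.deleteEdges {Sym2.map f e}).Reachable (f x) (f y) ↔
        (Γ.deleteEdges {e}).Reachable x y := Iso.reachable_iff (φ := isoDeleteEdge f e) (u := x) (v := y)
    have hd1 : (Γ'.deleteEdges {Sym2.map f e}).dist (f x) (f y) =
        (Γ.deleteEdges {e}).dist x y := iso_dist (isoDeleteEdge f e) x y
    have hd2 : Γ'.dist (f x) (f y) = Γ.dist x y := iso_dist f x y
    rcases hcond with h | h
    · exact Or.inl (by rwa [hre])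
    · exact Or.inr (by rwa [hd1, hd2])

end MEGAux3
namespace MEGAux4
open SimpleGraph Walk MEGAux MEGAux2 MEGAux3

variable {α β : Type*} {G : SimpleGraph α} {H : SimpleGraph β}

lemma monBy_of_slice (hG : G.Connected) (hH : H.Connected) {a c : α} (hac : G.Adj a c) (b : β)
    {S : Set (α × β)} {x y : α}
    (hx : (x, b) ∈ S) (hy : (y, b) ∈ S)
    (hcond : ¬ (G.deleteEdges {s(a, c)}).Reachable x y ∨
      (G.deleteEdges {s(a, c)}).dist x y ≠ G.dist x y) :
    monBy (G □ H) S s((a, b), (c, b)) := by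
  classical
  set e : Sym2 (α × β) := s((a, b), (c, b)) with he
  set P' := (G □ H).deleteEdges {e} with hP'
  refine ⟨(x, b), hx, (y, b), hy, ?_⟩
  by_cases hr : P'.Reachable (x, b) (y, b)
  case neg => exact Or.inl hr
  refine Or.inr ?_
  have key : ∀ w : P'.Walk (x, b) (y, b), G.dist x y < w.length := by
    intro w
    have hsub : ∀ ed ∈ w.edges, ed ∈ (G □ H).edgeSet := by
      intro ed hed
      have := w.edges_subset_edgeSet hed
      rw [hP', edgeSet_deleteEdges] at this
      exact this.1
    have hnot : e ∉ w.edges := by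
      intro hmem
      have := w.edges_subset_edgeSet hmem
      rw [hP', edgeSet_deleteEdges] at this
      exact this.2 rfl
    set w' := w.transfer (G □ H) hsub with hw'def
    have hlen : w'.length = w.length := Walk.length_transfer _ _
    have hedges : w'.edges = w.edges := Walk.edges_transfer _ _
    have hnot' : e ∉ w'.edges := by rwa [hedges]
    by_cases hca : s(a, c) ∈ (projL w').edges
    · obtain ⟨b₀, hb₀⟩ := projL_edges w' hca
      have hb₀b : b₀ ≠ b := by
        rintro rfl
        exact hnot' hb₀
      have hsup : ((a, b₀) : α × β) ∈ w'.support :=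
        w'.fst_mem_support_of_mem_edges hb₀
      have hlen2 : (w'.takeUntil _ hsup).length + (w'.dropUntil _ hsup).length = w'.length := by
        rw [← Walk.length_append, Walk.take_spec]
      have h1 := le_length_of_walk (w'.takeUntil _ hsup)
      have h2 := le_length_of_walk (w'.dropUntil _ hsup)
      simp only at h1 h2
      have htri : G.dist x y ≤ G.dist x a + G.dist a y := hG.dist_triangle
      have hpos : 0 < H.dist b b₀ := hH.pos_dist_of_ne (Ne.symm hb₀b)
      omega
    · have hvalid : ∀ ed ∈ (projL w').edges, ed ∉ ({s(a, c)} : Set (Sym2 α)) := by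
        intro ed hed hedm
        rw [Set.mem_singleton_iff] at hedm
        subst hedm
        exact hca hed
      have hreach : (G.deleteEdges {s(a, c)}).Reachable x y :=
        ⟨(projL w').toDeleteEdges _ hvalid⟩
      rcases hcond with h | h
      · exact absurd hreach h
      · have hge : G.dist x y ≤ (G.deleteEdges {s(a, c)}).dist x y :=
          dist_le_dist_of_le (deleteEdges_le _) hreach
        have hlt : G.dist x y < (G.deleteEdges {s(a, c)}).dist x y :=
          lt_of_le_of_ne hge (Ne.symm h)
        have hd : (G.deleteEdges {s(a, c)}).dist x y ≤ (projL w').length := by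
          have := dist_le ((projL w').toDeleteEdges _ hvalid)
          rwa [Walk.length_transfer] at this
        have hple := projL_length_le w'
        omega
  obtain ⟨wmin, hwmin⟩ := hr.exists_walk_length_eq_dist
  have hPd : (G □ H).dist (x, b) (y, b) = G.dist x y := by
    rw [boxProd_dist hG hH]
    simp
  have hk := key wmin
  show P'.dist (x, b) (y, b) ≠ (G □ H).dist (x, b) (y, b)
  omega

end MEGAux4
namespace MEGAux5
open SimpleGraph Walk MEGAux MEGAux2 MEGAux3 MEGAux4

variable {α β : Type*} {G : SimpleGraph α} {H : SimpleGraph β}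

lemma slice_of_monBy (hG : G.Connected) (hH : H.Connected) {a c : α} (hac : G.Adj a c) {b : β}
    (hb2 : ∃ b' : β, b' ≠ b) {S : Set (α × β)}
    (hmon : monBy (G □ H) S s((a, b), (c, b))) :
    ∃ x ∈ {v : α | (v, b) ∈ S}, ∃ y ∈ {v : α | (v, b) ∈ S},
      ¬ (G.deleteEdges {s(a, c)}).Reachable x y ∨
        (G.deleteEdges {s(a, c)}).dist x y ≠ G.dist x y := by
  classical
  obtain ⟨⟨x, u⟩, hxu, ⟨y, w₂⟩, hyw, hcond⟩ := hmon
  obtain ⟨b', hb'⟩ := hb2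
  set e : Sym2 (α × β) := s((a, b), (c, b)) with he
  set P' := (G □ H).deleteEdges {e} with hP'
  have hconn' : P'.Connected := deleteEdge_connected hG hH hac hb'
  have hr : P'.Reachable (x, u) (y, w₂) := hconn'.preconnected _ _
  rcases hcond with h | h
  · exact absurd hr h
  have hge : (G □ H).dist (x, u) (y, w₂) ≤ P'.dist (x, u) (y, w₂) :=
    dist_le_dist_of_le (deleteEdges_le _) hr
  have hlt : (G □ H).dist (x, u) (y, w₂) < P'.dist (x, u) (y, w₂) :=
    lt_of_le_of_ne hge (Ne.symm h)
  -- every geodesic walk contains e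
  have hkey : ∀ ω : (G □ H).Walk (x, u) (y, w₂),
      ω.length = (G □ H).dist (x, u) (y, w₂) → e ∈ ω.edges := by
    intro ω hω
    by_contra hne
    have hval : ∀ ed ∈ ω.edges, ed ∉ ({e} : Set (Sym2 (α × β))) := by
      intro ed hed hm
      rw [Set.mem_singleton_iff] at hm
      subst hm
      exact hne hed
    have hd : P'.dist (x, u) (y, w₂) ≤ (ω.toDeleteEdges {e} hval).length := dist_le _
    rw [Walk.length_transfer, hω] at hd
    omega
  obtain ⟨wg, hwg⟩ := hG.exists_walk_length_eq_dist x y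
  obtain ⟨wh, hwh⟩ := hH.exists_walk_length_eq_dist u w₂
  have hdP : (G □ H).dist (x, u) (y, w₂) = G.dist x y + H.dist u w₂ :=
    boxProd_dist hG hH (x, u) (y, w₂)
  -- first geodesic: G-steps at level u, then H-steps at column y
  have hub : u = b := by
    have hω₁len : ((wg.boxProdLeft H u).append (wh.boxProdRight G y)).length =
        (G □ H).dist (x, u) (y, w₂) := by
      rw [Walk.length_append, length_boxProdLeft', length_boxProdRight', hwg, hwh, hdP]
    have he₁ := hkey _ hω₁len
    rw [Walk.edges_append, List.mem_append] at he₁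
    rcases he₁ with hmem | hmem
    · obtain ⟨g₁, g₂, _, hedeq⟩ := edge_boxProdLeft_mem wg hmem
      rcases Sym2.eq_iff.1 hedeq with ⟨h1, _⟩ | ⟨h1, _⟩
      · exact ((Prod.ext_iff.1 h1).2).symm
      · exact ((Prod.ext_iff.1 h1).2).symm
    · obtain ⟨u₁, u₂, _, hedeq⟩ := edge_boxProdRight_mem wh hmem
      exfalso
      rcases Sym2.eq_iff.1 hedeq with ⟨h1, h2⟩ | ⟨h1, h2⟩
      · exact hac.ne (((Prod.ext_iff.1 h1).1).trans ((Prod.ext_iff.1 h2).1).symm)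
      · exact hac.ne (((Prod.ext_iff.1 h1).1).trans ((Prod.ext_iff.1 h2).1).symm)
  -- second geodesic: H-steps at column x, then G-steps at level w₂
  have hwb : w₂ = b := by
    have hω₂len : ((wh.boxProdRight G x).append (wg.boxProdLeft H w₂)).length =
        (G □ H).dist (x, u) (y, w₂) := by
      rw [Walk.length_append, length_boxProdLeft', length_boxProdRight', hwg, hwh, hdP]
      omega
    have he₂ := hkey _ hω₂len
    rw [Walk.edges_append, List.mem_append] at he₂
    rcases he₂ with hmem | hmem
    · obtain ⟨u₁, u₂, _, hedeq⟩ := edge_boxProdRight_mem wh hmem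
      exfalso
      rcases Sym2.eq_iff.1 hedeq with ⟨h1, h2⟩ | ⟨h1, h2⟩
      · exact hac.ne (((Prod.ext_iff.1 h1).1).trans ((Prod.ext_iff.1 h2).1).symm)
      · exact hac.ne (((Prod.ext_iff.1 h1).1).trans ((Prod.ext_iff.1 h2).1).symm)
    · obtain ⟨g₁, g₂, _, hedeq⟩ := edge_boxProdLeft_mem wg hmem
      rcases Sym2.eq_iff.1 hedeq with ⟨h1, _⟩ | ⟨h1, _⟩
      · exact ((Prod.ext_iff.1 h1).2).symm
      · exact ((Prod.ext_iff.1 h1).2).symm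
  rw [hub] at hxu
  rw [hwb] at hyw
  rw [hub, hwb] at hkey
  have hdPb : (G □ H).dist (x, b) (y, b) = G.dist x y := by
    rw [boxProd_dist hG hH (x, b) (y, b)]
    simp
  refine ⟨x, hxu, y, hyw, ?_⟩
  by_cases hre : (G.deleteEdges {s(a, c)}).Reachable x y
  · refine Or.inr fun heq => ?_
    obtain ⟨p, hp⟩ := hre.exists_walk_length_eq_dist
    have hsub : ∀ ed ∈ p.edges, ed ∈ G.edgeSet := by
      intro ed hed
      have := p.edges_subset_edgeSet hed
      rw [edgeSet_deleteEdges] at this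
      exact this.1
    have hnotac : s(a, c) ∉ p.edges := by
      intro hmem
      have := p.edges_subset_edgeSet hmem
      rw [edgeSet_deleteEdges] at this
      exact this.2 rfl
    set p' := p.transfer G hsub with hp'def
    have hlenp : ((p'.boxProdLeft H b)).length = (G □ H).dist (x, b) (y, b) := by
      rw [length_boxProdLeft', Walk.length_transfer, hp, heq, hdPb]
    have hmem := hkey _ hlenp
    obtain ⟨g₁, g₂, hg, hedeq⟩ := edge_boxProdLeft_mem p' hmem
    have hg' : s(g₁, g₂) ∈ p.edges := by
      rwa [Walk.edges_transfer] at hg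
    rcases Sym2.eq_iff.1 hedeq with ⟨h1, h2⟩ | ⟨h1, h2⟩
    · obtain rfl : a = g₁ := congrArg Prod.fst h1
      obtain rfl : c = g₂ := congrArg Prod.fst h2
      exact hnotac hg'
    · obtain rfl : a = g₂ := congrArg Prod.fst h1
      obtain rfl : c = g₁ := congrArg Prod.fst h2
      have h4 : s(a, c) ∈ p'.edges := by
        have h3 : s(a, c) = s(c, a) := Sym2.eq_swap
        rw [h3]
        exact hg
      rw [hp'def, Walk.edges_transfer] at h4
      exact hnotac h4
  · exact Or.inl hre

end MEGAux5
namespace MEGAux6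
open SimpleGraph Walk MEGAux MEGAux2 MEGAux3 MEGAux4 MEGAux5

variable {α β : Type*} (G : SimpleGraph α) (H : SimpleGraph β)

lemma mem_comm_image {S : Set (α × β)} {u : β} {v : α} :
    ((u, v) : β × α) ∈ ⇑(SimpleGraph.boxProdComm G H) '' S ↔ (v, u) ∈ S := by
  constructor
  · rintro ⟨⟨p1, p2⟩, hp, hpe⟩
    have h1 : p2 = u := (Prod.ext_iff.1 hpe).1
    have h2 : p1 = v := (Prod.ext_iff.1 hpe).2
    subst h1; subst h2
    exact hp
  · intro h
    exact ⟨(v, u), h, rfl⟩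

end MEGAux6

open SimpleGraph MEGAux MEGAux2 MEGAux3 MEGAux4 MEGAux5 MEGAux6

theorem isMEGSet_boxProd_iff_slices {V W : Type*} [Fintype V] [Fintype W]
    (G : SimpleGraph V) (H : SimpleGraph W)
    (hG : G.Connected) (hH : H.Connected)
    (hV : 1 < Fintype.card V) (hW : 1 < Fintype.card W)
    (S : Set (V × W)) :
    IsMEGSet (G □ H) S ↔
      (∀ x : V, IsMEGSet H {v : W | (x, v) ∈ S}) ∧
      (∀ y : W, IsMEGSet G {v : V | (v, y) ∈ S}) := by
  classical
  constructor
  · intro hS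
    constructor
    · intro x₀
      intro eh
      induction eh using Sym2.ind with
      | _ b₁ b₂ =>
        intro heh
        have hadj : H.Adj b₁ b₂ := (mem_edgeSet _).1 heh
        have hmonP : monBy (G □ H) S s((x₀, b₁), (x₀, b₂)) :=
          hS _ ((mem_edgeSet _).2 (Or.inr ⟨hadj, rfl⟩))
        have heq : Sym2.map (⇑(SimpleGraph.boxProdComm G H)) s((x₀, b₁), (x₀, b₂)) =
            s((b₁, x₀), (b₂, x₀)) := by
          rw [Sym2.map_pair_eq]
          rfl
        have hmonHG : monBy (H □ G) (⇑(SimpleGraph.boxProdComm G H) '' S)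
            s((b₁, x₀), (b₂, x₀)) := by
          rw [← heq]
          exact (monBy_map (SimpleGraph.boxProdComm G H) S _).2 hmonP
        obtain ⟨x', hx2⟩ := Fintype.exists_ne_of_one_lt_card hV x₀
        obtain ⟨x, hx, y, hy, hc⟩ :=
          slice_of_monBy hH hG hadj ⟨x', hx2⟩ hmonHG
        exact ⟨x, (mem_comm_image G H).1 hx, y, (mem_comm_image G H).1 hy, hc⟩
    · intro y₀
      intro eg
      induction eg using Sym2.ind with
      | _ a c =>
        intro heg
        have hac : G.Adj a c := (mem_edgeSet _).1 heg
        have hmonP : monBy (G □ H) S s((a, y₀), (c, y₀)) :=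
          hS _ ((mem_edgeSet _).2 (Or.inl ⟨hac, rfl⟩))
        obtain ⟨b', hb'⟩ := Fintype.exists_ne_of_one_lt_card hW y₀
        exact slice_of_monBy hG hH hac ⟨b', hb'⟩ hmonP
  · rintro ⟨hHs, hGs⟩
    intro e
    induction e using Sym2.ind with
    | _ p q =>
      intro he
      obtain ⟨p1, p2⟩ := p
      obtain ⟨q1, q2⟩ := q
      have hadj : (G □ H).Adj (p1, p2) (q1, q2) := (mem_edgeSet _).1 he
      rcases boxProd_adj.1 hadj with ⟨hG1, h2⟩ | ⟨hH1, h2⟩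
      · simp only at h2
        subst h2
        obtain ⟨x, hx, y, hy, hc⟩ := hGs p2 s(p1, q1) ((mem_edgeSet _).2 hG1)
        exact monBy_of_slice hG hH hG1 p2 hx hy hc
      · simp only at h2
        subst h2
        obtain ⟨x, hx, y, hy, hc⟩ := hHs p1 s(p2, q2) ((mem_edgeSet _).2 hH1)
        have hmonHG : monBy (H □ G) (⇑(SimpleGraph.boxProdComm G H) '' S)
            s((p2, p1), (q2, p1)) :=
          monBy_of_slice hH hG hH1 p1 ((mem_comm_image G H).2 hx)
            ((mem_comm_image G H).2 hy) hc
        have heq : Sym2.map (⇑(SimpleGraph.boxProdComm G H)) s((p1, p2), (p1, q2)) =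
            s((p2, p1), (q2, p1)) := by
          rw [Sym2.map_pair_eq]
          rfl
        rw [← heq] at hmonHG
        exact (monBy_map (SimpleGraph.boxProdComm G H) S _).1 hmonHG
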